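/- Let X be a compact metric space and f₁,…,f_k continuous self-maps of X generating a minimal IFS. Let ℙ be the Bernoulli measure on Σ = {1,…,k}^ℕ with strictly positive weights. Then for every x ∈ X and every nonempty open set U ⊆ X, ℙ-almost every ω ∈ Σ satisfies: there exists n ≥ 1 with f^n_ω(x) ∈ U, where f^n_ω = f_{ωₙ} ∘ ⋯ ∘ f_{ω₁}. -/

import Mathlib

open MeasureTheory
open scoped ENNReal

/-- Apply the maps of an IFS along a finite word: `f_{w_n} ∘ ⋯ ∘ f_{w_1}`. -/
def applyWord {X : Type*} {k : ℕ} (f : Fin k → X → X) (w : List (Fin k)) (x : X) : X :=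
  w.foldl (fun y i => f i y) x

/-- The fiberwise iterate `f^n_ω(x) = f_{ω_n} ∘ ⋯ ∘ f_{ω_1}(x)` (0-indexed `ω`). -/
def fIter {X : Type*} {k : ℕ} (f : Fin k → X → X) (ω : ℕ → Fin k) (x : X) : ℕ → X
  | 0 => x
  | n + 1 => f (ω n) (fIter f ω x n)

lemma fIter_congr {X : Type*} {k : ℕ} (f : Fin k → X → X) {ω ω' : ℕ → Fin k} {x : X} {n : ℕ}
    (h : ∀ i < n, ω i = ω' i) : fIter f ω x n = fIter f ω' x n := by
  induction n with
  | zero => rfl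
  | succ n ih =>
    simp only [fIter, ih (fun i hi => h i (Nat.lt_succ_of_lt hi)), h n (Nat.lt_succ_self n)]

lemma applyWord_cons {X : Type*} {k : ℕ} (f : Fin k → X → X) (a : Fin k) (t : List (Fin k))
    (x : X) : applyWord f (a :: t) x = applyWord f t (f a x) := rfl

lemma fIter_add_word {X : Type*} {k : ℕ} (f : Fin k → X → X) {ω : ℕ → Fin k} {x : X}
    (u : List (Fin k)) {n : ℕ}
    (h : ∀ j : Fin u.length, ω (n + j) = u.get j) :
    fIter f ω x (n + u.length) = applyWord f u (fIter f ω x n) := by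
  induction u generalizing n with
  | nil => simp [applyWord]
  | cons a t ih =>
    have h0 : ω n = a := by simpa using h ⟨0, by simp⟩
    have hlen : n + (a :: t).length = (n + 1) + t.length := by
      simp [List.length]; omega
    rw [hlen, ih (n := n + 1) (fun j => by
      have := h ⟨j.1 + 1, by simp [Nat.succ_lt_succ j.2]⟩
      simpa [Nat.add_assoc, Nat.add_comm 1 j.1] using this)]
    have : fIter f ω x (n + 1) = f a (fIter f ω x n) := by simp [fIter, h0]
    rw [this, applyWord_cons]

lemma continuous_applyWord {X : Type*} [TopologicalSpace X] {k : ℕ} (f : Fin k → X → X)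
    (hf : ∀ i, Continuous (f i)) (w : List (Fin k)) : Continuous (applyWord f w) := by
  induction w with
  | nil => exact continuous_id
  | cons a t ih =>
    have : applyWord f (a :: t) = (applyWord f t) ∘ (f a) := by
      funext x; rfl
    rw [this]; exact ih.comp (hf a)

theorem stmt6 {X : Type*} [MetricSpace X] [CompactSpace X] {k : ℕ}
    (f : Fin k → X → X) (hf : ∀ i, Continuous (f i))
    (hmin : ∀ x : X, Dense {y | ∃ w : List (Fin k), w ≠ [] ∧ y = applyWord f w x})
    (μ : Measure (ℕ → Fin k)) [IsProbabilityMeasure μ]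
    (pw : Fin k → ℝ≥0∞) (hpos : ∀ i, 0 < pw i) (hsum : ∑ i, pw i = 1)
    (hcyl : ∀ (n : ℕ) (w : Fin n → Fin k),
      μ {ω | ∀ i : Fin n, ω i = w i} = ∏ i, pw (w i)) :
    ∀ (x : X) (U : Set X), IsOpen U → U.Nonempty →
      ∀ᵐ ω ∂μ, ∃ n : ℕ, 1 ≤ n ∧ fIter f ω x n ∈ U := by
  classical
  have hk : 0 < k := by
    rcases Nat.eq_zero_or_pos k with h | h
    · subst h; simp at hsum
    · exact h
  have : Nonempty (Fin k) := ⟨⟨0, hk⟩⟩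
  intro x U hU hUne
  -- escape words
  have hesc : ∀ y : X, ∃ w : List (Fin k), w ≠ [] ∧ applyWord f w y ∈ U := by
    intro y
    obtain ⟨z, hz, hzU⟩ := (hmin y).exists_mem_open hU hUne
    obtain ⟨w, hwne, rfl⟩ := hz
    exact ⟨w, hwne, hzU⟩
  choose W hWne hWU using hesc
  -- uniform bound on word length via compactness
  have hVopen : ∀ y : X, IsOpen ((applyWord f (W y)) ⁻¹' U) := fun y =>
    hU.preimage (continuous_applyWord f hf (W y))
  have hcover : (Set.univ : Set X) ⊆ ⋃ y : X, (applyWord f (W y)) ⁻¹' U := by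
    intro z _
    exact Set.mem_iUnion.2 ⟨z, hWU z⟩
  obtain ⟨t, ht⟩ := isCompact_univ.elim_finite_subcover _ hVopen hcover
  set N : ℕ := t.sup fun y => (W y).length with hN
  have huniform : ∀ z : X, ∃ u : List (Fin k),
      u ≠ [] ∧ u.length ≤ N ∧ applyWord f u z ∈ U := by
    intro z
    have := ht (Set.mem_univ z)
    simp only [Set.mem_iUnion] at this
    obtain ⟨y, hyt, hz⟩ := this
    exact ⟨W y, hWne y, Finset.le_sup (f := fun y => (W y).length) hyt, hz⟩
  choose esc hescne hesclen hescU using huniform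
  -- the minimal weight and δ
  set c : ℝ≥0∞ := Finset.univ.inf' Finset.univ_nonempty pw with hcdef
  have hc0 : 0 < c := by
    rw [hcdef, Finset.lt_inf'_iff]
    exact fun i _ => hpos i
  have hcle : ∀ i, c ≤ pw i := fun i => Finset.inf'_le _ (Finset.mem_univ i)
  have hpw1 : ∀ i, pw i ≤ 1 := by
    intro i
    rw [← hsum]
    exact Finset.single_le_sum (fun j _ => (hpos j).le) (Finset.mem_univ i)
  have hc1 : c ≤ 1 := (hcle ⟨0, hk⟩).trans (hpw1 _)
  set δ : ℝ≥0∞ := c ^ N with hδdef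
  have hδ0 : 0 < δ := pos_iff_ne_zero.2 (pow_ne_zero N hc0.ne')
  have hδ1 : δ ≤ 1 := pow_le_one' hc1 N
  -- cylinders and avoidance sets
  set C : ∀ n : ℕ, (Fin n → Fin k) → Set (ℕ → Fin k) :=
    fun n w => {ω | ∀ i : Fin n, ω i = w i} with hCdef
  set A : ℕ → Set (ℕ → Fin k) :=
    fun n => {ω | ∀ m, 1 ≤ m → m ≤ n → fIter f ω x m ∉ U} with hAdef
  have hCmeas : ∀ (n : ℕ) (w : Fin n → Fin k), MeasurableSet (C n w) := by
    intro n w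
    have : C n w = ⋂ i : Fin n, (fun ω : ℕ → Fin k => ω i) ⁻¹' {w i} := by
      ext ω; simp [hCdef]
    rw [this]
    exact MeasurableSet.iInter fun i =>
      (measurable_pi_apply (i : ℕ)) (measurableSet_singleton (w i))
  have hCmu : ∀ (n : ℕ) (w : Fin n → Fin k), μ (C n w) = ∏ i, pw (w i) := fun n w => hcyl n w
  set S : ∀ n : ℕ, Finset (Fin n → Fin k) :=
    fun n => Finset.univ.filter (fun w => ∃ ω ∈ C n w, ω ∈ A n) with hSdef
  -- key: membership in A n only depends on the first n coordinates
  have hAdep : ∀ (n : ℕ) (ω ω' : ℕ → Fin k), (∀ i < n, ω i = ω' i) → ω ∈ A n → ω' ∈ A n := by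
    intro n ω ω' hagree hω m h1 h2
    rw [← fIter_congr f (fun i hi => hagree i (lt_of_lt_of_le hi h2))]
    exact hω m h1 h2
  have hmemC : ∀ (n : ℕ) (ω : ℕ → Fin k), ω ∈ C n (fun i : Fin n => ω i) := by
    intro n ω i; rfl
  have hAeq : ∀ n : ℕ, A n = ⋃ w ∈ S n, C n w := by
    intro n
    ext ω
    constructor
    · intro hω
      refine Set.mem_biUnion ?_ (hmemC n ω)
      rw [hSdef]
      exact Finset.mem_filter.2 ⟨Finset.mem_univ _, ⟨ω, hmemC n ω, hω⟩⟩
    · intro hω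
      obtain ⟨w, hwS, hωC⟩ := Set.mem_iUnion₂.1 hω
      rw [hSdef] at hwS
      obtain ⟨ω', hω'C, hω'A⟩ := (Finset.mem_filter.1 hwS).2
      exact hAdep n ω' ω (fun i hi => (hω'C ⟨i, hi⟩).trans (hωC ⟨i, hi⟩).symm) hω'A
  have hdisj : ∀ n : ℕ, (↑(S n) : Set (Fin n → Fin k)).PairwiseDisjoint (C n) := by
    intro n w _ w' _ hne
    refine Set.disjoint_left.2 fun ω hω hω' => hne ?_
    funext i
    exact (hω i).symm.trans (hω' i)
  have hAmu : ∀ n : ℕ, μ (A n) = ∑ w ∈ S n, μ (C n w) := by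
    intro n
    rw [hAeq n]
    exact measure_biUnion_finset (hdisj n) (fun w _ => hCmeas n w)
  -- the step estimate
  have hstep : ∀ n : ℕ, μ (A (n + N)) ≤ (1 - δ) * μ (A n) := by
    intro n
    set ext : (Fin n → Fin k) → (ℕ → Fin k) :=
      fun w i => if h : i < n then w ⟨i, h⟩ else Classical.arbitrary _ with hextdef
    set u : (Fin n → Fin k) → List (Fin k) := fun w => esc (fIter f (ext w) x n) with hudef
    set E : (Fin n → Fin k) → Set (ℕ → Fin k) :=
      fun w => {ω | ∀ j : Fin (u w).length, ω (n + j) = (u w).get j} with hEdef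
    have hinter : ∀ w : Fin n → Fin k,
        C n w ∩ E w
          = {ω | ∀ i : Fin (n + (u w).length), ω i = Fin.append w (u w).get i} := by
      intro w
      ext ω
      constructor
      · rintro ⟨h1, h2⟩ i
        refine Fin.addCases ?_ ?_ i
        · intro j
          rw [Fin.append_left]
          simpa [Fin.coe_castAdd] using h1 j
        · intro j
          rw [Fin.append_right]
          simpa [Fin.coe_natAdd] using h2 j
      · intro h
        constructor
        · intro i
          have := h (Fin.castAdd (u w).length i)
          rwa [Fin.append_left, Fin.coe_castAdd] at this
        · intro j
          have := h (Fin.natAdd n j)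
          rwa [Fin.append_right, Fin.coe_natAdd] at this
    have hEmu : ∀ w : Fin n → Fin k,
        μ (C n w ∩ E w)
          = (∏ i, pw (w i)) * ∏ j : Fin (u w).length, pw ((u w).get j) := by
      intro w
      rw [hinter w, hcyl (n + (u w).length) (Fin.append w (u w).get), Fin.prod_univ_add]
      simp [Fin.append_left, Fin.append_right]
    have hudel : ∀ w : Fin n → Fin k, δ ≤ ∏ j : Fin (u w).length, pw ((u w).get j) := by
      intro w
      calc δ = c ^ N := rfl
        _ ≤ c ^ (u w).length := pow_le_pow_of_le_one zero_le hc1 (hesclen _)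
        _ = ∏ _j : Fin (u w).length, c := by
            simp [Finset.prod_const]
        _ ≤ ∏ j : Fin (u w).length, pw ((u w).get j) :=
            Finset.prod_le_prod' (fun j _ => hcle _)
    have hsub : A (n + N) ⊆ ⋃ w ∈ S n, (C n w \ E w) := by
      intro ω hω
      have hωA : ω ∈ A n := fun m h1 h2 => hω m h1 (h2.trans (Nat.le_add_right n N))
      set w : Fin n → Fin k := fun i => ω i with hwdef
      refine Set.mem_biUnion ?_ ⟨hmemC n ω, ?_⟩
      · rw [hSdef]
        exact Finset.mem_filter.2 ⟨Finset.mem_univ _, ⟨ω, hmemC n ω, hωA⟩⟩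
      · intro hωE
        have hext : ∀ i < n, ext w i = ω i := by
          intro i hi; simp [hextdef, hi, hwdef]
        have hy : fIter f (ext w) x n = fIter f ω x n := fIter_congr f hext
        have hit : fIter f ω x (n + (u w).length)
            = applyWord f (u w) (fIter f ω x n) :=
          fIter_add_word f (u w) (fun j => hωE j)
        have hmem : fIter f ω x (n + (u w).length) ∈ U := by
          rw [hit, ← hy]; exact hescU _
        have hlen1 : 1 ≤ (u w).length := List.length_pos_iff.2 (hescne _)
        exact hω (n + (u w).length) (hlen1.trans (Nat.le_add_left _ _))
          (Nat.add_le_add_left (hesclen _) n) hmem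
    have hdiffle : ∀ w ∈ S n, μ (C n w \ E w) ≤ (1 - δ) * μ (C n w) := by
      intro w _
      have hEmeas : MeasurableSet (E w) := by
        have : E w = ⋂ j : Fin (u w).length,
            (fun ω : ℕ → Fin k => ω (n + j)) ⁻¹' {(u w).get j} := by
          ext ω; simp [hEdef]
        rw [this]
        exact MeasurableSet.iInter fun j =>
          (measurable_pi_apply _) (measurableSet_singleton _)
      have h1 : μ (C n w \ E w) = μ (C n w) - μ (C n w ∩ E w) := by
        rw [← Set.diff_self_inter]
        exact measure_diff Set.inter_subset_left
          ((hCmeas n w).inter hEmeas).nullMeasurableSet (measure_ne_top μ _)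
      have h2 : δ * μ (C n w) ≤ μ (C n w ∩ E w) := by
        rw [hEmu w, hCmu n w, mul_comm]
        exact mul_le_mul_right (hudel w) _
      calc μ (C n w \ E w) = μ (C n w) - μ (C n w ∩ E w) := h1
        _ ≤ μ (C n w) - δ * μ (C n w) := tsub_le_tsub_left h2 _
        _ ≤ (1 - δ) * μ (C n w) := by
            rw [tsub_le_iff_right, ← add_mul, tsub_add_cancel_of_le hδ1, one_mul]
    calc μ (A (n + N)) ≤ μ (⋃ w ∈ S n, (C n w \ E w)) := measure_mono hsub
      _ ≤ ∑ w ∈ S n, μ (C n w \ E w) := measure_biUnion_finset_le _ _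
      _ ≤ ∑ w ∈ S n, (1 - δ) * μ (C n w) := Finset.sum_le_sum hdiffle
      _ = (1 - δ) * μ (A n) := by rw [← Finset.mul_sum, hAmu n]
  have hiter : ∀ m : ℕ, μ (A (m * N)) ≤ (1 - δ) ^ m := by
    intro m
    induction m with
    | zero => simpa using (prob_le_one (μ := μ))
    | succ m ih =>
      have hmul : (m + 1) * N = m * N + N := by ring
      rw [hmul, pow_succ]
      calc μ (A (m * N + N)) ≤ (1 - δ) * μ (A (m * N)) := hstep _
        _ ≤ (1 - δ) * (1 - δ) ^ m := mul_le_mul_right ih _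
        _ = (1 - δ) ^ m * (1 - δ) := mul_comm _ _
  rw [MeasureTheory.ae_iff]
  have hBsub : ∀ m : ℕ,
      {ω | ¬ ∃ n, 1 ≤ n ∧ fIter f ω x n ∈ U} ⊆ A (m * N) := by
    intro m ω hω m' h1 _
    exact fun hU' => hω ⟨m', h1, hU'⟩
  have hBle : ∀ m : ℕ,
      μ {ω | ¬ ∃ n, 1 ≤ n ∧ fIter f ω x n ∈ U} ≤ (1 - δ) ^ m :=
    fun m => (measure_mono (hBsub m)).trans (hiter m)
  have htend : Filter.Tendsto (fun m => (1 - δ) ^ m) Filter.atTop (nhds 0) :=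
    ENNReal.tendsto_pow_atTop_nhds_zero_of_lt_one
      (ENNReal.sub_lt_self ENNReal.one_ne_top one_ne_zero hδ0.ne')
  exact le_antisymm (ge_of_tendsto' htend hBle) zero_le
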